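/- Let n ≥ 1, let 0 ≤ p ≤ 1 be real, and let G be the n×n real symmetric matrix with G_{ii} = 1/n and G_{ij} = p/n for i ≠ j (a positive semidefinite matrix). Then ∑_{i=1}^{n} ((√G)_{ii})² = (1/n)·( √(p + (1−p)/n) + (n−1)·√((1−p)/n) )². -/

import Mathlib

open Matrix

open scoped ComplexOrder in
/-- The square root of a positive semidefinite matrix (the definition removed from Mathlib,
restated with its old meaning). -/
noncomputable def Matrix.PosSemidef.sqrt {n 𝕜 : Type*} [Fintype n] [DecidableEq n] [RCLike 𝕜]
    {A : Matrix n n 𝕜} (hA : A.PosSemidef) : Matrix n n 𝕜 :=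
  hA.1.eigenvectorUnitary.1 * diagonal ((↑) ∘ (√·) ∘ hA.1.eigenvalues) *
    (star hA.1.eigenvectorUnitary : Matrix n n 𝕜)

theorem stmt_12 (n : ℕ) (hn : 1 ≤ n) (p : ℝ) (hp0 : 0 ≤ p) (hp1 : p ≤ 1)
    (G : Matrix (Fin n) (Fin n) ℝ)
    (hGdef : ∀ i j, G i j = if i = j then (1 : ℝ) / n else p / n)
    (hG : G.PosSemidef) :
    ∑ i, (hG.sqrt i i) ^ 2 =
      (1 / n) * (Real.sqrt (p + (1 - p) / n) +
        ((n : ℝ) - 1) * Real.sqrt ((1 - p) / n)) ^ 2 := by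
  have hn0 : (0 : ℝ) < n := by exact_mod_cast hn
  set a : ℝ := (1 - p) / n with ha
  set b : ℝ := p / n with hb
  have ha0 : 0 ≤ a := div_nonneg (by linarith) hn0.le
  have hb0 : 0 ≤ b := div_nonneg hp0 hn0.le
  set α : ℝ := Real.sqrt a with hα
  set c : ℝ := Real.sqrt (p + a) with hc
  have hα0 : 0 ≤ α := Real.sqrt_nonneg _
  have hc0 : 0 ≤ c := Real.sqrt_nonneg _
  have hαc : α ≤ c := Real.sqrt_le_sqrt (by linarith)
  set β : ℝ := (c - α) / n with hβ
  have hβ0 : 0 ≤ β := div_nonneg (by linarith) hn0.le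
  have hα2 : α ^ 2 = a := Real.sq_sqrt ha0
  have hc2 : c ^ 2 = p + a := Real.sq_sqrt (by linarith)
  -- the candidate square root
  set S : Matrix (Fin n) (Fin n) ℝ :=
    Matrix.of (fun i j => (if i = j then α else 0) + β) with hS
  have hSapp : ∀ i j, S i j = (if i = j then α else 0) + β := fun i j => rfl
  -- key scalar identity : 2αβ + nβ² = b
  have key : 2 * α * β + (n : ℝ) * β ^ 2 = b := by
    have h1 : (α + (n : ℝ) * β) ^ 2 = a + (n : ℝ) * b := by
      have he : α + (n : ℝ) * β = c := by
        rw [hβ]; field_simp; ring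
      rw [he, hc2, hb]
      field_simp
      ring
    have h3 : (n : ℝ) * (2 * α * β + (n : ℝ) * β ^ 2) = (n : ℝ) * b := by
      have h2 : α ^ 2 + 2 * (n : ℝ) * α * β + (n : ℝ) ^ 2 * β ^ 2 = a + (n : ℝ) * b := by
        rw [← h1]; ring
      rw [hα2] at h2
      nlinarith [h2]
    exact mul_left_cancel₀ hn0.ne' h3
  -- S is positive semidefinite
  have hSpsd : S.PosSemidef := by
    refine Matrix.PosSemidef.of_dotProduct_mulVec_nonneg ?_ ?_
    · ext i j
      simp [hSapp, conjTranspose_apply, eq_comm]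
    · intro x
      set T : ℝ := ∑ j, x j with hT
      have hmv : ∀ i, (S *ᵥ x) i = α * x i + β * T := by
        intro i
        simp only [mulVec, dotProduct, hSapp]
        rw [Finset.sum_congr rfl (fun j _ => add_mul _ _ _), Finset.sum_add_distrib]
        congr 1
        · simp
        · rw [← Finset.mul_sum]
      simp only [dotProduct, star_trivial, hmv]
      have hcalc : ∑ i, x i * (α * x i + β * T) = α * (∑ i, x i ^ 2) + β * T ^ 2 := by
        calc ∑ i, x i * (α * x i + β * T)
            = ∑ i, (α * x i ^ 2 + (β * T) * x i) :=
              Finset.sum_congr rfl fun i _ => by ring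
          _ = α * (∑ i, x i ^ 2) + (β * T) * ∑ i, x i := by
              rw [Finset.sum_add_distrib, ← Finset.mul_sum, ← Finset.mul_sum]
          _ = α * (∑ i, x i ^ 2) + β * T ^ 2 := by rw [← hT]; ring
      rw [hcalc]
      have h1 : 0 ≤ ∑ i, x i ^ 2 := Finset.sum_nonneg fun i _ => sq_nonneg _
      positivity
  -- S ^ 2 = G
  have hsq : S ^ 2 = G := by
    have hab : a + b = 1 / (n : ℝ) := by
      rw [ha, hb]; field_simp; ring
    have hαα : α * α = a := by rw [← hα2]; ring
    ext i j
    rw [pow_two, mul_apply, hGdef]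
    have hterm : ∀ k, S i k * S k j
        = ((if i = k then α else 0) + β) * ((if k = j then α else 0) + β) := fun k => rfl
    rw [Finset.sum_congr rfl fun k _ => hterm k]
    simp only [mul_add, add_mul, mul_ite, ite_mul, mul_zero, zero_mul, zero_add, add_zero,
      Finset.sum_add_distrib, Finset.sum_ite_eq, Finset.sum_ite_eq', Finset.mem_univ, if_true,
      Finset.sum_const, Finset.card_univ, Fintype.card_fin, nsmul_eq_mul]
    by_cases h : i = j
    · subst h
      simp only [if_true, eq_self_iff_true]
      linear_combination hαα + key + hab
    · simp only [h, if_false]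
      linear_combination key
  -- identify sqrt
  have hsqrt : hG.sqrt = S := by
    have e1 : hG.sqrt = cfc Real.sqrt G := by
      rw [hG.1.cfc_eq]; rfl
    have hspec : ∀ x ∈ spectrum ℝ S, 0 ≤ x := by
      intro x hx
      rw [hSpsd.1.spectrum_real_eq_range_eigenvalues] at hx
      obtain ⟨i, rfl⟩ := hx
      exact hSpsd.eigenvalues_nonneg i
    have hSsa : IsSelfAdjoint S := hSpsd.1
    rw [e1, ← hsq, ← cfc_pow_id (R := ℝ) S 2, ← cfc_comp (R := ℝ) Real.sqrt (· ^ 2) S]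
    conv_rhs => rw [← cfc_id' ℝ S]
    exact cfc_congr fun x hx => by simp [Real.sqrt_sq (hspec x hx)]
  have hdiag : ∀ i : Fin n, hG.sqrt i i = α + β := by
    intro i; rw [hsqrt, hSapp, if_pos rfl]
  rw [Finset.sum_congr rfl fun i _ => by rw [hdiag i]]
  rw [Finset.sum_const, Finset.card_univ, Fintype.card_fin, nsmul_eq_mul]
  have hαβ : α + β = (c + ((n : ℝ) - 1) * α) / n := by
    rw [hβ]; field_simp; ring
  rw [hαβ]
  field_simp
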